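/- Let u : ℝ → ℝ be twice continuously differentiable on [0,1] with u(0) = 0 and u(1) = 0. Then (∫₀¹ u'(x)⁴ dx)^{1/2} ≤ 3√2 · (∫₀¹ u(x)² dx)^{1/4} · (∫₀¹ u'(x)² dx)^{1/4} · (∫₀¹ u''(x)² dx)^{1/2}. -/

import Mathlib

open MeasureTheory intervalIntegral Set

lemma ii01 {f : ℝ → ℝ} (hf : ContinuousOn f (Set.Icc 0 1)) :
    IntervalIntegrable f volume 0 1 := by
  apply ContinuousOn.intervalIntegrable
  rwa [Set.uIcc_of_le zero_le_one]

lemma cs_aux (f g : ℝ → ℝ) (hf : ContinuousOn f (Set.Icc 0 1))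
    (hg : ContinuousOn g (Set.Icc 0 1)) :
    (∫ x in (0:ℝ)..1, f x * g x)^2 ≤
      (∫ x in (0:ℝ)..1, f x ^ 2) * (∫ x in (0:ℝ)..1, g x ^ 2) := by
  have key : ∀ t : ℝ, 0 ≤ (∫ x in (0:ℝ)..1, g x ^ 2) * (t*t) +
      (2 * ∫ x in (0:ℝ)..1, f x * g x) * t + (∫ x in (0:ℝ)..1, f x ^ 2) := by
    intro t
    have e : EqOn (fun x => (t * g x + f x)^2)
        (fun x => (t*t) * g x ^ 2 + (2*t) * (f x * g x) + f x ^ 2) (Set.uIcc (0:ℝ) 1) :=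
      fun x _ => by ring
    have h1 : (∫ x in (0:ℝ)..1, (t * g x + f x)^2) =
        (∫ x in (0:ℝ)..1, g x ^ 2) * (t*t) +
        (2 * ∫ x in (0:ℝ)..1, f x * g x) * t + (∫ x in (0:ℝ)..1, f x ^ 2) := by
      rw [intervalIntegral.integral_congr e,
        intervalIntegral.integral_add (((ii01 (f := fun x => g x ^ 2) (hg.pow 2)).const_mul _).add
          ((ii01 (f := fun x => f x * g x) (hf.mul hg)).const_mul _)) (ii01 (f := fun x => f x ^ 2) (hf.pow 2)),
        intervalIntegral.integral_add ((ii01 (f := fun x => g x ^ 2) (hg.pow 2)).const_mul _)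
          ((ii01 (f := fun x => f x * g x) (hf.mul hg)).const_mul _),
        intervalIntegral.integral_const_mul, intervalIntegral.integral_const_mul]
      ring
    rw [← h1]
    exact intervalIntegral.integral_nonneg zero_le_one (fun x _ => sq_nonneg _)
  have hd := discrim_le_zero key
  rw [discrim] at hd
  nlinarith [hd]

lemma final_calc (A B X Y J C : ℝ) (hA0 : 0 ≤ A) (hB0 : 0 ≤ B) (hX0 : 0 ≤ X) (hY0 : 0 ≤ Y)
    (hAJ : A = -3*J) (hJ : J^2 ≤ C*B) (hC : C ≤ 2*(Real.sqrt X * Real.sqrt Y)*A) :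
    A ^ ((1:ℝ)/2) ≤ 3 * Real.sqrt 2 * X ^ ((1:ℝ)/4) * Y ^ ((1:ℝ)/4) * B ^ ((1:ℝ)/2) := by
  have hRHS : 0 ≤ 3 * Real.sqrt 2 * X ^ ((1:ℝ)/4) * Y ^ ((1:ℝ)/4) * B ^ ((1:ℝ)/2) := by
    have := Real.rpow_nonneg hX0 ((1:ℝ)/4)
    have := Real.rpow_nonneg hY0 ((1:ℝ)/4)
    have := Real.rpow_nonneg hB0 ((1:ℝ)/2)
    have : (0:ℝ) ≤ 3 * Real.sqrt 2 := by positivity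
    positivity
  rcases eq_or_lt_of_le hA0 with h | hApos
  · rw [← h, Real.zero_rpow (by norm_num)]
    exact hRHS
  · rw [show ((1:ℝ)/4) = (1/2)*(1/2) from by norm_num, Real.rpow_mul hX0, Real.rpow_mul hY0]
    simp only [← Real.sqrt_eq_rpow]
    set M := 2*(Real.sqrt X * Real.sqrt Y) with hM
    have hA2 : A^2 = 9*J^2 := by rw [hAJ]; ring
    have h1 : A^2 ≤ 9*C*B := by nlinarith [hJ]
    have h2 : A^2 ≤ 9*(M*A)*B := by nlinarith [hC, hB0]
    have h3 : A ≤ 9*M*B := by nlinarith [h2, hApos]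
    have e2 : (Real.sqrt 2)^2 = 2 := Real.sq_sqrt (by norm_num)
    have eX : (Real.sqrt (Real.sqrt X))^2 = Real.sqrt X := Real.sq_sqrt (Real.sqrt_nonneg X)
    have eY : (Real.sqrt (Real.sqrt Y))^2 = Real.sqrt Y := Real.sq_sqrt (Real.sqrt_nonneg Y)
    have eB : (Real.sqrt B)^2 = B := Real.sq_sqrt hB0
    have hsq : 9*M*B = (3 * Real.sqrt 2 * Real.sqrt (Real.sqrt X) * Real.sqrt (Real.sqrt Y)
        * Real.sqrt B)^2 := by
      rw [show (3 * Real.sqrt 2 * Real.sqrt (Real.sqrt X) * Real.sqrt (Real.sqrt Y)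
        * Real.sqrt B)^2 = 3^2*(Real.sqrt 2)^2*(Real.sqrt (Real.sqrt X))^2
        *(Real.sqrt (Real.sqrt Y))^2*(Real.sqrt B)^2 from by ring, e2, eX, eY, eB, hM]
      ring
    calc Real.sqrt A ≤ Real.sqrt (9*M*B) := Real.sqrt_le_sqrt h3
      _ = _ := by
        rw [hsq, Real.sqrt_sq (by positivity)]

/-- If `u` is twice continuously differentiable on `[0,1]` with `u 0 = 0` and `u 1 = 0`,
then `(∫₀¹ u'⁴)^{1/2} ≤ 3√2 (∫₀¹ u²)^{1/4} (∫₀¹ u'²)^{1/4} (∫₀¹ u''²)^{1/2}`. -/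
theorem integral_deriv_fourth_bound (u u' u'' : ℝ → ℝ)
    (hderiv : ∀ x ∈ Set.Icc (0:ℝ) 1, HasDerivWithinAt u (u' x) (Set.Icc (0:ℝ) 1) x)
    (hderiv' : ∀ x ∈ Set.Icc (0:ℝ) 1, HasDerivWithinAt u' (u'' x) (Set.Icc (0:ℝ) 1) x)
    (hcont : ContinuousOn u'' (Set.Icc (0:ℝ) 1))
    (h0 : u 0 = 0) (h1 : u 1 = 0) :
    (∫ x in (0:ℝ)..1, (u' x) ^ 4) ^ ((1:ℝ)/2) ≤
      3 * Real.sqrt 2 * (∫ x in (0:ℝ)..1, (u x) ^ 2) ^ ((1:ℝ)/4) *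
        (∫ x in (0:ℝ)..1, (u' x) ^ 2) ^ ((1:ℝ)/4) *
        (∫ x in (0:ℝ)..1, (u'' x) ^ 2) ^ ((1:ℝ)/2) := by
  have hu_c : ContinuousOn u (Set.Icc 0 1) := fun x hx => (hderiv x hx).continuousWithinAt
  have hu'_c : ContinuousOn u' (Set.Icc 0 1) := fun x hx => (hderiv' x hx).continuousWithinAt
  have hat : ∀ x ∈ Set.Ioo (0:ℝ) 1, HasDerivAt u (u' x) x := fun x hx =>
    (hderiv x (Set.Ioo_subset_Icc_self hx)).hasDerivAt (Icc_mem_nhds hx.1 hx.2)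
  have hat' : ∀ x ∈ Set.Ioo (0:ℝ) 1, HasDerivAt u' (u'' x) x := fun x hx =>
    (hderiv' x (Set.Ioo_subset_Icc_self hx)).hasDerivAt (Icc_mem_nhds hx.1 hx.2)
  set A := ∫ x in (0:ℝ)..1, (u' x) ^ 4 with hAdef
  set B := ∫ x in (0:ℝ)..1, (u'' x) ^ 2 with hBdef
  set X := ∫ x in (0:ℝ)..1, (u x) ^ 2 with hXdef
  set Y := ∫ x in (0:ℝ)..1, (u' x) ^ 2 with hYdef
  set J := ∫ x in (0:ℝ)..1, u x * u' x ^ 2 * u'' x with hJdef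
  set C := ∫ x in (0:ℝ)..1, u x ^ 2 * u' x ^ 4 with hCdef
  -- nonnegativity
  have hA0 : 0 ≤ A := intervalIntegral.integral_nonneg zero_le_one (fun x _ => by positivity)
  have hB0 : 0 ≤ B := intervalIntegral.integral_nonneg zero_le_one (fun x _ => by positivity)
  have hX0 : 0 ≤ X := intervalIntegral.integral_nonneg zero_le_one (fun x _ => by positivity)
  have hY0 : 0 ≤ Y := intervalIntegral.integral_nonneg zero_le_one (fun x _ => by positivity)
  -- integration by parts : A = -3 * J
  have hAJ : A = -3 * J := by
    have hFd : ∀ x ∈ Set.Ioo (0:ℝ) 1, HasDerivAt (fun y => u y * (u' y)^3)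
        (u' x ^ 4 + 3 * (u x * u' x ^ 2 * u'' x)) x := by
      intro x hx
      have h := (hat x hx).mul ((hat' x hx).pow 3)
      refine h.congr_deriv ?_
      simp only [Pi.pow_apply]
      push_cast
      ring
    have hint : (∫ x in (0:ℝ)..1, (u' x ^ 4 + 3 * (u x * u' x ^ 2 * u'' x))) =
        u 1 * (u' 1)^3 - u 0 * (u' 0)^3 :=
      intervalIntegral.integral_eq_sub_of_hasDeriv_right_of_le zero_le_one
        (hu_c.mul (hu'_c.pow 3))
        (fun x hx => (hFd x hx).hasDerivWithinAt)
        (ii01 ((hu'_c.pow 4).add ((continuousOn_const.mul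
          ((hu_c.mul (hu'_c.pow 2)).mul hcont)))))
    rw [h0, h1] at hint
    rw [intervalIntegral.integral_add (ii01 (f := fun x => u' x ^ 4) (hu'_c.pow 4))
      ((ii01 (f := fun x => u x * u' x ^ 2 * u'' x) ((hu_c.mul (hu'_c.pow 2)).mul hcont)).const_mul 3),
      intervalIntegral.integral_const_mul] at hint
    simp only [← hAdef, ← hJdef] at hint
    linarith [hint]
  -- Cauchy-Schwarz : J^2 ≤ C * B
  have hJB : J^2 ≤ C * B := by
    have h := cs_aux (fun x => u x * u' x ^ 2) u'' ((hu_c.mul (hu'_c.pow 2))) hcont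
    have e : EqOn (fun x => (u x * u' x ^ 2)^2) (fun x => u x ^ 2 * u' x ^ 4)
        (Set.uIcc (0:ℝ) 1) := fun x _ => by ring
    rwa [intervalIntegral.integral_congr e] at h
  -- sup bound and C ≤ 2 √X √Y A
  have habs : (∫ x in (0:ℝ)..1, |u x * u' x|) ≤ Real.sqrt X * Real.sqrt Y := by
    have h := cs_aux (fun x => |u x|) (fun x => |u' x|) hu_c.abs hu'_c.abs
    have e1 : EqOn (fun x => |u x| * |u' x|) (fun x => |u x * u' x|) (Set.uIcc (0:ℝ) 1) :=
      fun x _ => (abs_mul _ _).symm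
    have e2 : EqOn (fun x => |u x| ^ 2) (fun x => u x ^ 2) (Set.uIcc (0:ℝ) 1) :=
      fun x _ => sq_abs _
    have e3 : EqOn (fun x => |u' x| ^ 2) (fun x => u' x ^ 2) (Set.uIcc (0:ℝ) 1) :=
      fun x _ => sq_abs _
    rw [intervalIntegral.integral_congr e1, intervalIntegral.integral_congr e2,
      intervalIntegral.integral_congr e3] at h
    have hnn : 0 ≤ ∫ x in (0:ℝ)..1, |u x * u' x| :=
      intervalIntegral.integral_nonneg zero_le_one (fun x _ => abs_nonneg _)
    nlinarith [Real.sq_sqrt hX0, Real.sq_sqrt hY0, Real.sqrt_nonneg X, Real.sqrt_nonneg Y,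
      mul_nonneg (Real.sqrt_nonneg X) (Real.sqrt_nonneg Y)]
  have hiabs : IntervalIntegrable (fun x => |u x * u' x|) volume 0 1 :=
    ii01 (hu_c.mul hu'_c).abs
  have hsup : ∀ y ∈ Set.Icc (0:ℝ) 1, u y ^ 2 ≤ 2 * (Real.sqrt X * Real.sqrt Y) := by
    intro y hy
    have hftc : (∫ x in (0:ℝ)..y, 2 * (u x * u' x)) = u y ^ 2 - u 0 ^ 2 := by
      apply intervalIntegral.integral_eq_sub_of_hasDeriv_right_of_le hy.1
        ((hu_c.mono (Set.Icc_subset_Icc le_rfl hy.2)).pow 2)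
      · intro x hx
        have hx1 : x ∈ Set.Ioo (0:ℝ) 1 := ⟨hx.1, lt_of_lt_of_le hx.2 hy.2⟩
        have h := (hat x hx1).pow 2
        have : HasDerivAt (fun y => u y ^ 2) (2 * (u x * u' x)) x := by
          refine h.congr_deriv ?_; push_cast; ring
        exact this.hasDerivWithinAt
      · exact (ii01 (continuousOn_const.mul (hu_c.mul hu'_c))).mono_set
          (by rw [Set.uIcc_of_le hy.1, Set.uIcc_of_le zero_le_one]
              exact Set.Icc_subset_Icc le_rfl hy.2)
    have hm1 : (∫ x in (0:ℝ)..y, 2 * (u x * u' x)) ≤ ∫ x in (0:ℝ)..y, 2 * |u x * u' x| := by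
      apply intervalIntegral.integral_mono_on hy.1
      · exact (ii01 (continuousOn_const.mul (hu_c.mul hu'_c))).mono_set
          (by rw [Set.uIcc_of_le hy.1, Set.uIcc_of_le zero_le_one]
              exact Set.Icc_subset_Icc le_rfl hy.2)
      · exact (hiabs.const_mul 2).mono_set
          (by rw [Set.uIcc_of_le hy.1, Set.uIcc_of_le zero_le_one]
              exact Set.Icc_subset_Icc le_rfl hy.2)
      · intro x _
        have := le_abs_self (u x * u' x)
        linarith
    have hm2 : (∫ x in (0:ℝ)..y, 2 * |u x * u' x|) ≤ ∫ x in (0:ℝ)..1, 2 * |u x * u' x| := by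
      apply intervalIntegral.integral_mono_interval le_rfl hy.1 hy.2
      · exact ae_of_all _ (fun x => by positivity)
      · exact hiabs.const_mul 2
    simp only [intervalIntegral.integral_const_mul] at hftc hm1 hm2
    rw [h0] at hftc
    nlinarith [habs]
  have hCA : C ≤ 2 * (Real.sqrt X * Real.sqrt Y) * A := by
    have h : C ≤ ∫ x in (0:ℝ)..1, 2 * (Real.sqrt X * Real.sqrt Y) * u' x ^ 4 := by
      apply intervalIntegral.integral_mono_on zero_le_one
        (ii01 ((hu_c.pow 2).mul (hu'_c.pow 4)))
        ((ii01 (hu'_c.pow 4)).const_mul _)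
      intro x hx
      exact mul_le_mul_of_nonneg_right (hsup x hx) (by show (0:ℝ) ≤ u' x ^ 4; positivity)
    rwa [intervalIntegral.integral_const_mul] at h
  exact final_calc A B X Y J C hA0 hB0 hX0 hY0 hAJ hJB hCA
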